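/- Let f:(0,∞)→(0,∞) be decreasing, log-convex on (1,∞) (with a.e. derivative f'), and suppose sup_{|x|≥1} ∫_{|y|>1} exp(−(f'(|y|)/f(|y|)) (x·y)/|x|) f(|y|) dy = ∫_{|y|>1} exp(−(f'(|y|)/f(|y|)) y₁) f(|y|) dy < ∞. Then f has the direct jump property: there exists C₃>0 such that ∫_{|x−y|>1, |y|>1} f(|x−y|) f(|y|) dy ≤ C₃ f(|x|) for all |x| ≥ 1. -/

import Mathlib

open MeasureTheory Real Set Filter


/-- Key scalar inequality for log-convex decreasing profiles. -/
lemma stmt4_key_ineq (f f' : ℝ → ℝ)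
    (hf_pos : ∀ r : ℝ, 0 < r → 0 < f r)
    (hf_dec : ∀ r s : ℝ, 0 < r → r ≤ s → f s ≤ f r)
    (hlogconv : ConvexOn ℝ (Set.Ioi (1:ℝ)) (fun r => Real.log (f r)))
    {a b s t : ℝ} (ha : 1 < a) (hb : 1 ≤ b) (hs : 1 < s)
    (hsa : s ≤ a) (hge : b - t ≤ a)
    (hds : HasDerivAt f (f' s) s) :
    f a * f s ≤ f b * (Real.exp (-(f' s / f s) * t) * f s + f s) := by
  have hfs := hf_pos s (by linarith)
  have hfa := hf_pos a (by linarith)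
  have hfb := hf_pos b (by linarith)
  have hE : 0 < Real.exp (-(f' s / f s) * t) := Real.exp_pos _
  rcases le_or_gt b a with hba | hab
  · have hfab : f a ≤ f b := hf_dec b a (by linarith) hba
    have e1 : f b * (Real.exp (-(f' s / f s) * t) * f s + f s)
        = f b * (Real.exp (-(f' s / f s) * t) * f s) + f b * f s := mul_add _ _ _
    have e2 : 0 < f b * (Real.exp (-(f' s / f s) * t) * f s) := mul_pos hfb (mul_pos hE hfs)
    have e3 : f a * f s ≤ f b * f s := mul_le_mul_of_nonneg_right hfab hfs.le
    linarith
  · -- a < b : use the log-convexity bound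
    have hf'neg : f' s ≤ 0 := by
      have htend : Tendsto (slope f s) (nhdsWithin s (Set.Ioi s)) (nhds (f' s)) :=
        (hasDerivAt_iff_tendsto_slope.mp hds).mono_left
          (nhdsWithin_mono _ (fun r hr => ne_of_gt hr))
      refine le_of_tendsto htend ?_
      filter_upwards [self_mem_nhdsWithin] with r hr
      have hr' : s < r := hr
      have : f r ≤ f s := hf_dec s r (by linarith) hr'.le
      rw [slope_def_field]
      apply div_nonpos_of_nonpos_of_nonneg <;> linarith
    have hc : f' s / f s ≤ 0 := div_nonpos_of_nonpos_of_nonneg hf'neg hfs.le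
    have hgd : HasDerivAt (fun r => Real.log (f r)) (f' s / f s) s := hds.log hfs.ne'
    have hsb : s < b := lt_of_le_of_lt hsa hab
    have h1b : (1:ℝ) < b := by linarith
    set g : ℝ → ℝ := fun r => Real.log (f r) with hgdef
    have h1 : f' s / f s ≤ slope g s b :=
      hlogconv.le_slope_of_hasDerivAt (Set.mem_Ioi.2 hs) (Set.mem_Ioi.2 h1b) hsb hgd
    have h2 : slope g s b ≤ slope g a b := by
      rcases eq_or_lt_of_le hsa with rfl | hlt
      · exact le_rfl
      · have := hlogconv.secant_mono (Set.mem_Ioi.2 h1b) (Set.mem_Ioi.2 hs)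
          (Set.mem_Ioi.2 ha) (ne_of_lt hsb) (ne_of_lt hab) hsa
        rw [slope_comm g s b, slope_comm g a b]
        simpa [slope_def_field] using this
    have hba' : 0 < b - a := by linarith
    have h3 : (f' s / f s) * (b - a) ≤ g b - g a := by
      have hle : f' s / f s ≤ (g b - g a) / (b - a) := by
        have := le_trans h1 h2
        rwa [slope_def_field] at this
      calc (f' s / f s) * (b - a) ≤ ((g b - g a) / (b - a)) * (b - a) := by
            exact mul_le_mul_of_nonneg_right hle hba'.le
        _ = g b - g a := by field_simp
    have h4 : (f' s / f s) * t ≤ (f' s / f s) * (b - a) := by nlinarith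
    have h5 : g a ≤ g b + (-(f' s / f s)) * t := by nlinarith
    have hfa' : f a ≤ f b * Real.exp (-(f' s / f s) * t) := by
      have hexp := Real.exp_le_exp.mpr h5
      rw [Real.exp_add] at hexp
      rw [show g a = Real.log (f a) from rfl, show g b = Real.log (f b) from rfl,
        Real.exp_log hfa, Real.exp_log hfb] at hexp
      exact hexp
    have e1 : f b * (Real.exp (-(f' s / f s) * t) * f s + f s)
        = (f b * Real.exp (-(f' s / f s) * t)) * f s + f b * f s := by ring
    have e2 : 0 < f b * f s := mul_pos hfb hfs
    have e3 : f a * f s ≤ (f b * Real.exp (-(f' s / f s) * t)) * f s :=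
      mul_le_mul_of_nonneg_right hfa' hfs.le
    linarith


lemma stmt4_radial_null {d : ℕ} {N : Set ℝ} (hNm : MeasurableSet N)
    (hN1 : N ⊆ Set.Ioi (0:ℝ)) (hN0 : volume N = 0) :
    volume {y : EuclideanSpace ℝ (Fin d) | ‖y‖ ∈ N} = 0 := by
  set E := EuclideanSpace ℝ (Fin d)
  set A : Set E := (fun y : E => ‖y‖) ⁻¹' N with hA
  have hAm : MeasurableSet A := hNm.preimage measurable_norm
  have hA0 : (0:E) ∉ A := by
    intro h
    have : (0:ℝ) ∈ N := by simpa [A] using h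
    exact lt_irrefl 0 (Set.mem_Ioi.mp (hN1 this))
  have hAsub : A ⊆ ({0}ᶜ : Set E) := fun y hy h0 => hA0 (by simpa [Set.mem_singleton_iff.mp h0] using hy)
  set R : Set (Set.Ioi (0:ℝ)) := Subtype.val ⁻¹' N with hR
  have hRm : MeasurableSet R := hNm.preimage measurable_subtype_coe
  have hRnull : Measure.volumeIoiPow (Module.finrank ℝ E - 1) R = 0 := by
    rw [Measure.volumeIoiPow, withDensity_apply _ hRm]
    have hbase : (volume : Measure ℝ).comap Subtype.val R = 0 := by
      rw [comap_subtype_coe_apply measurableSet_Ioi]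
      refine measure_mono_null ?_ hN0
      rintro r ⟨⟨r', hr'⟩, hmem, rfl⟩
      exact hmem
    exact setLIntegral_measure_zero _ _ hbase
  have hmp := (volume : Measure E).measurePreserving_homeomorphUnitSphereProd
  have hpre : Subtype.val ⁻¹' A
      = (homeomorphUnitSphereProd E) ⁻¹' ((Set.univ : Set (Metric.sphere (0:E) 1)) ×ˢ R) := by
    ext y
    simp [A, R, Set.mem_prod]
  have hcomap : (volume : Measure E).comap (Subtype.val : ({0}ᶜ : Set E) → E)
      (Subtype.val ⁻¹' A) = 0 := by
    rw [hpre, hmp.measure_preimage (MeasurableSet.univ.prod hRm).nullMeasurableSet,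
      Measure.prod_prod, hRnull, mul_zero]
  rw [comap_subtype_coe_apply (measurableSet_singleton (0:E)).compl] at hcomap
  have himg : (Subtype.val : ({0}ᶜ : Set E) → E) '' (Subtype.val ⁻¹' A) = A := by
    rw [Subtype.image_preimage_coe]
    exact Set.inter_eq_self_of_subset_right hAsub |>.symm ▸ rfl
  rw [himg] at hcomap
  exact hcomap

lemma stmt4_radial_ae {d : ℕ} {P : ℝ → Prop}
    (h : ∀ᵐ r ∂(volume.restrict (Set.Ioi (1:ℝ))), P r) :
    ∃ B : Set (EuclideanSpace ℝ (Fin d)), MeasurableSet B ∧ volume B = 0 ∧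
      ∀ y ∉ B, 1 < ‖y‖ → P ‖y‖ := by
  rw [ae_restrict_iff' measurableSet_Ioi] at h
  rw [ae_iff] at h
  obtain ⟨N, hsub, hNm, hN0⟩ := exists_measurable_superset_of_null h
  set N' := N ∩ Set.Ioi (1:ℝ) with hN'
  have hN'm : MeasurableSet N' := hNm.inter measurableSet_Ioi
  have hN'sub : N' ⊆ Set.Ioi (0:ℝ) := fun r hr => Set.mem_Ioi.2 (lt_trans one_pos hr.2)
  have hN'0 : volume N' = 0 := measure_mono_null Set.inter_subset_left hN0
  refine ⟨{y | ‖y‖ ∈ N'}, hN'm.preimage measurable_norm,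
    stmt4_radial_null hN'm hN'sub hN'0, ?_⟩
  intro y hy hnorm
  by_contra hP
  apply hy
  have : ‖y‖ ∈ {a | ¬(a ∈ Set.Ioi (1:ℝ) → P a)} := by
    simp only [Set.mem_setOf_eq]
    intro hcontra
    exact hP (hcontra hnorm)
  exact ⟨hsub this, hnorm⟩

set_option maxHeartbeats 2000000 in
theorem stmt_4 {d : ℕ} (hd : 0 < d) (f f' : ℝ → ℝ)
    (hf_pos : ∀ r : ℝ, 0 < r → 0 < f r)
    (hf_dec : ∀ r s : ℝ, 0 < r → r ≤ s → f s ≤ f r)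
    (hderiv : ∀ᵐ r ∂(volume.restrict (Set.Ioi (1:ℝ))), HasDerivAt f (f' r) r)
    (hlogconv : ConvexOn ℝ (Set.Ioi (1:ℝ)) (fun r => Real.log (f r)))
    (hint : IntegrableOn
      (fun y : EuclideanSpace ℝ (Fin d) =>
        Real.exp (-(f' ‖y‖ / f ‖y‖) * y ⟨0, hd⟩) * f ‖y‖)
      {y : EuclideanSpace ℝ (Fin d) | 1 < ‖y‖})
    (hsup : ∀ x : EuclideanSpace ℝ (Fin d), 1 ≤ ‖x‖ →
      (∫ y in {y : EuclideanSpace ℝ (Fin d) | 1 < ‖y‖},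
        Real.exp (-(f' ‖y‖ / f ‖y‖) * ((inner ℝ x y : ℝ) / ‖x‖)) * f ‖y‖)
      ≤ ∫ y in {y : EuclideanSpace ℝ (Fin d) | 1 < ‖y‖},
        Real.exp (-(f' ‖y‖ / f ‖y‖) * y ⟨0, hd⟩) * f ‖y‖) :
    ∃ C₃ > (0:ℝ), ∀ x : EuclideanSpace ℝ (Fin d), 1 ≤ ‖x‖ →
      (∫ y in {y : EuclideanSpace ℝ (Fin d) | 1 < ‖x - y‖ ∧ 1 < ‖y‖},
        f ‖x - y‖ * f ‖y‖) ≤ C₃ * f ‖x‖ := by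
  classical
  set S : Set (EuclideanSpace ℝ (Fin d)) := {y | 1 < ‖y‖} with hSdef
  have hS_meas : MeasurableSet S := (isOpen_lt continuous_const continuous_norm).measurableSet
  set F : EuclideanSpace ℝ (Fin d) → ℝ :=
    fun y => Real.exp (-(f' ‖y‖ / f ‖y‖) * y ⟨0, hd⟩) * f ‖y‖ with hFdef
  -- a measurable antitone global version of f ∘ norm
  set h0 : ℝ → ℝ := fun r => f (max r 1) with hh0
  have h0anti : Antitone h0 := fun r r' hrr' =>
    hf_dec _ _ (lt_of_lt_of_le one_pos (le_max_right r 1)) (max_le_max hrr' le_rfl)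
  have h0meas : Measurable h0 := h0anti.measurable
  have h0eq : ∀ y ∈ S, h0 ‖y‖ = f ‖y‖ := by
    intro y hy
    have hy1 : (1:ℝ) < ‖y‖ := hy
    rw [hh0]
    simp only [max_eq_left hy1.le]
  -- F ∘ neg is integrable on S
  have hnegS : (Neg.neg : EuclideanSpace ℝ (Fin d) → EuclideanSpace ℝ (Fin d)) ⁻¹' S = S := by
    ext y; simp [hSdef]
  have hFneg : IntegrableOn (fun y => F (-y)) S volume := by
    have hh := (MeasurePreserving.integrableOn_comp_preimage
      (Measure.measurePreserving_neg (volume : Measure (EuclideanSpace ℝ (Fin d))))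
      (Homeomorph.neg (EuclideanSpace ℝ (Fin d))).measurableEmbedding).2 hint
    rw [hnegS] at hh
    exact hh
  -- f ∘ norm is integrable on S
  have hfn_meas : AEStronglyMeasurable (fun y : EuclideanSpace ℝ (Fin d) => f ‖y‖)
      (volume.restrict S) := by
    refine ((h0meas.comp measurable_norm).aestronglyMeasurable).congr ?_
    exact (ae_restrict_iff' hS_meas).2 (ae_of_all _ fun y hy => h0eq y hy)
  have hfn : IntegrableOn (fun y : EuclideanSpace ℝ (Fin d) => f ‖y‖) S volume := by
    refine Integrable.mono (hint.add hFneg) hfn_meas ?_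
    refine (ae_restrict_iff' hS_meas).2 (ae_of_all _ fun y hy => ?_)
    have hy1 : (1:ℝ) < ‖y‖ := hy
    have hfy : 0 < f ‖y‖ := hf_pos _ (by linarith)
    set c : ℝ := f' ‖y‖ / f ‖y‖ with hc
    set w : ℝ := y ⟨0, hd⟩ with hw
    have hFy : F y = Real.exp (-c * w) * f ‖y‖ := rfl
    have hFny : F (-y) = Real.exp (-c * (-w)) * f ‖y‖ := by
      rw [hFdef]
      simp only [norm_neg]
      congr 2
    have hsum : (1:ℝ) ≤ Real.exp (-c * w) + Real.exp (-c * (-w)) := by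
      rcases le_total 0 (-c * w) with hh | hh
      · have h1 := Real.one_le_exp hh
        have h2 := Real.exp_pos (-c * (-w))
        linarith
      · have h0' : 0 ≤ -c * (-w) := by nlinarith
        have h1 := Real.one_le_exp h0'
        have h2 := Real.exp_pos (-c * w)
        linarith
    have hpos1 : 0 < Real.exp (-c * w) := Real.exp_pos _
    have hpos2 : 0 < Real.exp (-c * (-w)) := Real.exp_pos _
    rw [Real.norm_eq_abs, abs_of_pos hfy]
    refine le_trans ?_ (le_abs_self _)
    simp only [Pi.add_apply]
    rw [hFy, hFny]
    nlinarith
  -- nonnegativity of the two base integrals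
  have hInn : 0 ≤ ∫ y in S, F y := by
    refine setIntegral_nonneg hS_meas fun y hy => ?_
    have hy1 : (1:ℝ) < ‖y‖ := hy
    exact mul_nonneg (Real.exp_pos _).le (hf_pos _ (by linarith)).le
  have hI0nn : 0 ≤ ∫ y in S, (fun y : EuclideanSpace ℝ (Fin d) => f ‖y‖) y := by
    refine setIntegral_nonneg hS_meas fun y hy => ?_
    have hy1 : (1:ℝ) < ‖y‖ := hy
    exact (hf_pos _ (by linarith)).le
  refine ⟨2 * ((∫ y in S, F y) + ∫ y in S, f ‖y‖) + 1, by positivity, ?_⟩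
  intro x hx
  have hxpos : (0:ℝ) < ‖x‖ := lt_of_lt_of_le one_pos hx
  have hxne : ‖x‖ ≠ 0 := ne_of_gt hxpos
  -- rotation sending e₀ to x/‖x‖
  set u : EuclideanSpace ℝ (Fin d) := ‖x‖⁻¹ • x with hu
  have hunorm : ‖u‖ = 1 := by
    rw [hu, norm_smul, norm_inv, norm_norm, inv_mul_cancel₀ hxne]
  have hortho : Orthonormal ℝ
      (Set.restrict ({(⟨0, hd⟩ : Fin d)} : Set (Fin d)) (fun _ => u)) := by
    rw [orthonormal_iff_ite]
    intro i j
    have hij : i = j := by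
      have h1 : (i : Fin d) = ⟨0, hd⟩ := i.2
      have h2 : (j : Fin d) = ⟨0, hd⟩ := j.2
      exact Subtype.ext (h1.trans h2.symm)
    subst hij
    rw [if_pos rfl]
    show (inner ℝ u u : ℝ) = 1
    rw [real_inner_self_eq_norm_mul_norm, hunorm]
    norm_num
  have hcard : Module.finrank ℝ (EuclideanSpace ℝ (Fin d)) = Fintype.card (Fin d) := by
    rw [finrank_euclideanSpace_fin, Fintype.card_fin]
  obtain ⟨b, hb⟩ := hortho.exists_orthonormalBasis_extension_of_card_eq hcard
  have hb0 : b ⟨0, hd⟩ = u := hb _ rfl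
  set U := b.repr with hU
  have hUnorm : ∀ y : EuclideanSpace ℝ (Fin d), ‖U y‖ = ‖y‖ := fun y => U.norm_map y
  have hU0 : ∀ y : EuclideanSpace ℝ (Fin d), (U y) ⟨0, hd⟩ = (inner ℝ x y : ℝ) / ‖x‖ := by
    intro y
    rw [hU, b.repr_apply_apply, hb0, hu, real_inner_smul_left, div_eq_inv_mul]
  have hUS : ⇑U ⁻¹' S = S := by
    ext y
    simp only [hSdef, Set.mem_preimage, Set.mem_setOf_eq, hUnorm]
  have hmpU := b.measurePreserving_repr
  have embU : MeasurableEmbedding ⇑U := U.toHomeomorph.measurableEmbedding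
  have hKxint : IntegrableOn (fun y => F (U y)) S volume := by
    have hh := (hmpU.integrableOn_comp_preimage embU).2 hint
    rw [hUS] at hh
    exact hh
  have hKxval : ∫ y in S, F (U y) = ∫ y in S, F y := by
    have hh := hmpU.setIntegral_preimage_emb embU F S
    rw [hUS] at hh
    exact hh
  have hKx : ∀ y : EuclideanSpace ℝ (Fin d),
      F (U y) = Real.exp (-(f' ‖y‖ / f ‖y‖) * ((inner ℝ x y : ℝ) / ‖x‖)) * f ‖y‖ := by
    intro y
    rw [hFdef]
    simp only [hUnorm y, hU0 y]
  -- the comparison function Φ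
  set Φ : EuclideanSpace ℝ (Fin d) → ℝ :=
    S.indicator (fun y => F (U y) + f ‖y‖) with hΦdef
  have hΦnn : ∀ z, 0 ≤ Φ z := by
    intro z
    rw [hΦdef]
    by_cases hz : z ∈ S
    · rw [Set.indicator_of_mem hz]
      have hz1 : (1:ℝ) < ‖z‖ := hz
      have h1 : 0 ≤ F (U z) := by
        rw [hKx z]
        exact mul_nonneg (Real.exp_pos _).le (hf_pos _ (by linarith)).le
      have h2 : 0 ≤ f ‖z‖ := (hf_pos _ (by linarith)).le
      linarith
    · rw [Set.indicator_of_notMem hz]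
  have hΦint : Integrable Φ volume :=
    MeasureTheory.IntegrableOn.integrable_indicator (Integrable.add hKxint hfn) hS_meas
  have hΦval : ∫ z, Φ z = (∫ y in S, F y) + ∫ y in S, f ‖y‖ := by
    rw [hΦdef, integral_indicator hS_meas, integral_add hKxint hfn, hKxval]
  -- the reflection y ↦ x - y
  have hmpσ : MeasurePreserving (fun y : EuclideanSpace ℝ (Fin d) => x - y) volume volume :=
    Measure.measurePreserving_sub_left volume x
  have embσ : MeasurableEmbedding (fun y : EuclideanSpace ℝ (Fin d) => x - y) :=
    (MeasurableEquiv.subLeft x).measurableEmbedding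
  have hΦσint : Integrable (fun y => Φ (x - y)) volume :=
    (hmpσ.integrable_comp_emb embσ).2 hΦint
  have hΦσval : ∫ y, Φ (x - y) = ∫ z, Φ z := hmpσ.integral_comp embσ Φ
  -- a.e. differentiability along both radii
  obtain ⟨B₁, hB₁m, hB₁0, hB₁⟩ := stmt4_radial_ae (d := d) hderiv
  set B₂ : Set (EuclideanSpace ℝ (Fin d)) := (fun y => x - y) ⁻¹' B₁ with hB₂def
  have hB₂0 : volume B₂ = 0 := by
    rw [hB₂def, hmpσ.measure_preimage hB₁m.nullMeasurableSet]
    exact hB₁0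
  set D : Set (EuclideanSpace ℝ (Fin d)) := {y | 1 < ‖x - y‖ ∧ 1 < ‖y‖} with hDdef
  have hD_meas : MeasurableSet D := by
    have : D = ((fun y : EuclideanSpace ℝ (Fin d) => x - y) ⁻¹' S) ∩ S := by
      ext y; simp [hDdef, hSdef]
    rw [this]
    exact (hS_meas.preimage (measurable_const.sub measurable_id)).inter hS_meas
  set p : EuclideanSpace ℝ (Fin d) → ℝ := fun y => f ‖x - y‖ * f ‖y‖ with hpdef
  have hfb : 0 < f ‖x‖ := hf_pos _ (by linarith)
  -- pointwise bound
  have hbound : ∀ y, y ∉ B₁ → y ∉ B₂ →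
      D.indicator p y ≤ f ‖x‖ * (Φ y + Φ (x - y)) := by
    intro y hy1 hy2
    by_cases hyD : y ∈ D
    · have h1 : (1:ℝ) < ‖x - y‖ := hyD.1
      have h2 : (1:ℝ) < ‖y‖ := hyD.2
      rw [Set.indicator_of_mem hyD]
      have hyS : y ∈ S := h2
      have hxyS : x - y ∈ S := h1
      have hΦy : Φ y = F (U y) + f ‖y‖ := by rw [hΦdef]; exact Set.indicator_of_mem hyS _
      have hΦxy : Φ (x - y) = F (U (x - y)) + f ‖x - y‖ := by
        rw [hΦdef]; exact Set.indicator_of_mem hxyS _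
      have hinx : (inner ℝ x (x - y) : ℝ) = ‖x‖ * ‖x‖ - (inner ℝ x y : ℝ) := by
        rw [inner_sub_right, real_inner_self_eq_norm_mul_norm]
      rcases le_total ‖y‖ ‖x - y‖ with hcase | hcase
      · -- bound f ‖x-y‖ using derivative at ‖y‖
        have hds := hB₁ y hy1 h2
        set t : ℝ := (inner ℝ x y : ℝ) / ‖x‖ with ht
        have htmul : ‖x‖ * t = (inner ℝ x y : ℝ) := by
          rw [ht]; field_simp
        have hge : ‖x‖ - t ≤ ‖x - y‖ := by
          have hCS : (inner ℝ x (x - y) : ℝ) ≤ ‖x‖ * ‖x - y‖ := real_inner_le_norm x (x - y)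
          rw [hinx] at hCS
          have h3 : ‖x‖ * (‖x‖ - t) ≤ ‖x‖ * ‖x - y‖ := by
            rw [mul_sub, htmul]; linarith
          exact (mul_le_mul_iff_right₀ hxpos).mp h3
        have hkey := stmt4_key_ineq f f' hf_pos hf_dec hlogconv h1 hx h2 hcase hge hds
        have heq : Real.exp (-(f' ‖y‖ / f ‖y‖) * t) * f ‖y‖ = F (U y) := (hKx y).symm
        rw [heq] at hkey
        have hΦxynn := hΦnn (x - y)
        rw [hΦy]
        have hsplit : f ‖x‖ * ((F (U y) + f ‖y‖) + Φ (x - y))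
            = f ‖x‖ * (F (U y) + f ‖y‖) + f ‖x‖ * Φ (x - y) := by ring
        have hpos : 0 ≤ f ‖x‖ * Φ (x - y) := mul_nonneg hfb.le hΦxynn
        exact le_trans hkey (by linarith)
      · -- bound f ‖y‖ using derivative at ‖x - y‖
        have hds := hB₁ (x - y) hy2 h1
        set t : ℝ := (inner ℝ x (x - y) : ℝ) / ‖x‖ with ht
        have htmul : ‖x‖ * t = (inner ℝ x (x - y) : ℝ) := by
          rw [ht]; field_simp
        have hge : ‖x‖ - t ≤ ‖y‖ := by
          have hCS : (inner ℝ x y : ℝ) ≤ ‖x‖ * ‖y‖ := real_inner_le_norm x y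
          have h3 : ‖x‖ * (‖x‖ - t) ≤ ‖x‖ * ‖y‖ := by
            rw [mul_sub, htmul]; linarith [hinx]
          exact (mul_le_mul_iff_right₀ hxpos).mp h3
        have hkey := stmt4_key_ineq f f' hf_pos hf_dec hlogconv h2 hx h1 hcase hge hds
        have heq : Real.exp (-(f' ‖x - y‖ / f ‖x - y‖) * t) * f ‖x - y‖ = F (U (x - y)) :=
          (hKx (x - y)).symm
        rw [heq] at hkey
        have hΦynn := hΦnn y
        rw [hΦxy]
        have hsplit : f ‖x‖ * (Φ y + (F (U (x - y)) + f ‖x - y‖))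
            = f ‖x‖ * (F (U (x - y)) + f ‖x - y‖) + f ‖x‖ * Φ y := by ring
        have hpos : 0 ≤ f ‖x‖ * Φ y := mul_nonneg hfb.le hΦynn
        exact le_trans (le_of_eq (mul_comm (f ‖x - y‖) (f ‖y‖))) (le_trans hkey (by linarith))
    · rw [Set.indicator_of_notMem hyD]
      exact mul_nonneg hfb.le (add_nonneg (hΦnn y) (hΦnn (x - y)))
  -- assemble
  have hpnn : ∀ y, 0 ≤ D.indicator p y := by
    intro y
    by_cases hyD : y ∈ D
    · rw [Set.indicator_of_mem hyD]
      have h1 : (1:ℝ) < ‖x - y‖ := hyD.1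
      have h2 : (1:ℝ) < ‖y‖ := hyD.2
      exact mul_nonneg (hf_pos _ (by linarith)).le (hf_pos _ (by linarith)).le
    · rw [Set.indicator_of_notMem hyD]
  have hgint : Integrable (fun y => f ‖x‖ * (Φ y + Φ (x - y))) volume :=
    (hΦint.add hΦσint).const_mul (f ‖x‖)
  have hmain : ∫ y in D, p y ≤ f ‖x‖ * ((∫ z, Φ z) + ∫ y, Φ (x - y)) := by
    rw [← integral_indicator hD_meas]
    calc ∫ y, D.indicator p y
        ≤ ∫ y, f ‖x‖ * (Φ y + Φ (x - y)) := by
          refine integral_mono_of_nonneg (ae_of_all _ hpnn) hgint ?_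
          filter_upwards [compl_mem_ae_iff.mpr hB₁0, compl_mem_ae_iff.mpr hB₂0] with y hy1 hy2
          exact hbound y hy1 hy2
      _ = f ‖x‖ * ((∫ z, Φ z) + ∫ y, Φ (x - y)) := by
          rw [integral_const_mul, integral_add hΦint hΦσint]
  rw [hΦσval, hΦval] at hmain
  calc (∫ y in D, p y) ≤ f ‖x‖ * (((∫ y in S, F y) + ∫ y in S, f ‖y‖)
        + ((∫ y in S, F y) + ∫ y in S, f ‖y‖)) := hmain
    _ ≤ (2 * ((∫ y in S, F y) + ∫ y in S, f ‖y‖) + 1) * f ‖x‖ := by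
        nlinarith [hfb, hInn, hI0nn]
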